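/- Consider ℤ^{d+1} = ℤ^d × ℤ with halves ℤ^{d+1}_± = ℤ^d × (±ℕ₊), boundary Γ = ℤ^d × {0} and normal N = e_{d+1}. For n_i, n_o ∈ ℕ, consider n_i admissible incoming leads γ_j and n_o admissible outgoing leads ρ_k lying in Γ with tangents in the tangential directions TΓ, which pairwise do not cross tangentially. Let ℙ be the adapted projection with symbol P(x) = 1 on ℤ^{d+1}_+, P(x) = 0 on ℤ^{d+1}_−, and P(x) = |−N⟩⟨−N| on Γ, and let ℙ_L := ∑_j ℙ_{γ_j} + ∑_k ℙ_{ρ_k} be the total projection on the quantum leads. Let ℂ be any coin that is reflecting on Γ (C(x)|±N⟩ = |∓N⟩ for all x ∈ Γ) and satisfies |⟨τ_α(t+1), C(α(t)) τ_α(t)⟩| = 1 along every lead α. Then, for Q := ℙ + ℙ_L and Φ := U*QU − Q, one has ind(Φ) = dim ker(Φ − 1) − dim ker(Φ + 1) = n_o − n_i; moreover U maps every vector supported in ℤ^{d+1}_± into a vector supported in ℤ^{d+1}_± ∪ Γ, each Ran P_{ρ_k}(1) is a wandering subspace for U, and each Ran P_{γ_j}(−1) is a wandering subspace for U*. -/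

import Mathlib

open ContinuousLinearMap

noncomputable section

/-- Sites of the lattice `ℤ^{d+1}`. -/
abbrev Site (d : ℕ) := Fin (d + 1) → ℤ

/-- The coin space `ℂ^{2(d+1)}`. -/
abbrev CoinSp (d : ℕ) := EuclideanSpace ℂ (Fin (2 * (d + 1)))

/-- The Hilbert space `ℓ²(ℤ^{d+1}; ℂ^{2(d+1)})`. -/
abbrev QWH (d : ℕ) := lp (fun _ : Site d => CoinSp d) 2

/-- The lattice vector of the `i`-th quantum direction. -/
def dirVec (d : ℕ) (i : Fin (2 * (d + 1))) : Site d :=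
  fun j => if (j : ℕ) = (i : ℕ) / 2 then (if (i : ℕ) % 2 = 0 then 1 else -1) else 0

/-- The coin-space basis vector `|τ⟩` of the `i`-th direction. -/
def coinVec (d : ℕ) (i : Fin (2 * (d + 1))) : CoinSp d := EuclideanSpace.single i 1

/-- The rank-one projection `P_τ = |τ⟩⟨τ|`. -/
def Pdir (d : ℕ) (i : Fin (2 * (d + 1))) : CoinSp d →L[ℂ] CoinSp d :=
  (innerSL ℂ (coinVec d i)).smulRight (coinVec d i)

/-- The index of the inward normal direction `|+N⟩ = |+e_{d+1}⟩`. -/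
def idxPN (d : ℕ) : Fin (2 * (d + 1)) := ⟨2 * d, by omega⟩

/-- The index of the outward normal direction `|−N⟩ = |−e_{d+1}⟩`. -/
def idxMN (d : ℕ) : Fin (2 * (d + 1)) := ⟨2 * d + 1, by omega⟩

/-- The last (normal) coordinate of a site of `ℤ^{d+1} = ℤ^d × ℤ`. -/
def lastCoord (d : ℕ) (x : Site d) : ℤ := x (Fin.last d)

/-- The symbol of the bulk projection: `1` on `ℤ^{d+1}_+`, `0` on `ℤ^{d+1}_−` and
`|−N⟩⟨−N|` on the boundary `Γ = ℤ^d × {0}`. -/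
def bulkSym (d : ℕ) (x : Site d) : CoinSp d →L[ℂ] CoinSp d :=
  if 0 < lastCoord d x then 1 else if lastCoord d x < 0 then 0 else Pdir d (idxMN d)

/-- The vector `|x₀, τ₀⟩ ∈ ℓ²(ℤ^{d+1}; ℂ^{2(d+1)})`, i.e. `x ↦ δ_{x,x₀} |τ₀⟩`. -/
def leadVec (d : ℕ) (x : Site d) (i : Fin (2 * (d + 1))) : QWH d :=
  lp.single 2 x (coinVec d i)

/-- The rank-one projection onto `|x₀, τ₀⟩`. -/
def leadProj (d : ℕ) (x : Site d) (i : Fin (2 * (d + 1))) : QWH d →L[ℂ] QWH d :=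
  (innerSL ℂ (leadVec d x i)).smulRight (leadVec d x i)


namespace Stmt15Aux
set_option linter.unusedSectionVars false

section Abstract

variable {H : Type*} [NormedAddCommGroup H] [InnerProductSpace ℂ H] [CompleteSpace H]

local notation "⟪" x ", " y "⟫" => @inner ℂ _ _ x y

/-- rank one operator `|u⟩⟨u|`. -/
def rk1 (u : H) : H →L[ℂ] H := (innerSL ℂ u).smulRight u

lemma rk1_apply (u ψ : H) : rk1 u ψ = ⟪u, ψ⟫ • u := rfl

lemma rk1_smul_unit {a : ℂ} (ha : ‖a‖ = 1) (u : H) : rk1 (a • u) = rk1 u := by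
  ext ψ
  simp only [rk1_apply, inner_smul_left, smul_smul]
  rw [mul_comm, ← mul_assoc, show a * (starRingEnd ℂ) a = 1 by
    rw [Complex.mul_conj']; norm_num [ha]]
  simp

lemma adj_rk1 (U : H →L[ℂ] H) (w ψ : H) :
    adjoint U (rk1 w (U ψ)) = rk1 (adjoint U w) ψ := by
  simp only [rk1_apply, map_smul, adjoint_inner_left]

lemma hasSum_congr' {ι : Type*} {f g : ι → H} {a : H}
    (h : ∀ i, f i = g i) (hf : HasSum f a) : HasSum g a :=
  (funext h : f = g) ▸ hf

variable {n : ℕ}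

lemma sum_rk1_apply (u : Fin n → H) (ψ : H) :
    (∑ k, rk1 (u k)) ψ = ∑ k, ⟪u k, ψ⟫ • u k := by
  simp [rk1_apply, ContinuousLinearMap.sum_apply]

lemma sum_rk1_symm (u : Fin n → H) (φ ψ : H) :
    ⟪(∑ k, rk1 (u k)) φ, ψ⟫ = ⟪φ, (∑ k, rk1 (u k)) ψ⟫ := by
  simp only [sum_rk1_apply, sum_inner, inner_sum, inner_smul_left, inner_smul_right]
  congr 1; ext k
  simp [mul_comm]

lemma sum_rk1_inner {u : Fin n → H} (hu : Orthonormal ℂ u) (k : Fin n) (ψ : H) :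
    ⟪u k, (∑ j, rk1 (u j)) ψ⟫ = ⟪u k, ψ⟫ := by
  simp only [sum_rk1_apply, inner_sum, inner_smul_right]
  rw [Finset.sum_eq_single k]
  · rw [orthonormal_iff_ite.mp hu k k]; simp
  · intro j _ hj
    rw [orthonormal_iff_ite.mp hu k j, if_neg (Ne.symm hj)]; ring
  · simp

lemma sum_rk1_idem {u : Fin n → H} (hu : Orthonormal ℂ u) (ψ : H) :
    (∑ k, rk1 (u k)) ((∑ k, rk1 (u k)) ψ) = (∑ k, rk1 (u k)) ψ := by
  conv_lhs => rw [sum_rk1_apply]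
  conv_rhs => rw [sum_rk1_apply]
  congr 1; ext k
  rw [sum_rk1_inner hu]

lemma eig_one {P V : H →L[ℂ] H}
    (hPs : ∀ φ ψ, ⟪P φ, ψ⟫ = ⟪φ, P ψ⟫) (hPi : ∀ ψ, P (P ψ) = P ψ)
    (hVs : ∀ φ ψ, ⟪V φ, ψ⟫ = ⟪φ, V ψ⟫) (hVi : ∀ ψ, V (V ψ) = V ψ)
    (ψ : H) : P ψ - V ψ = ψ ↔ (P ψ = ψ ∧ V ψ = 0) := by
  constructor
  · intro h
    have hP2 : ⟪ψ, P ψ⟫ = (‖P ψ‖ : ℂ)^2 := by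
      conv_lhs => rw [← hPi ψ]
      rw [← hPs, inner_self_eq_norm_sq_to_K]; norm_cast
    have hV2 : ⟪ψ, V ψ⟫ = (‖V ψ‖ : ℂ)^2 := by
      conv_lhs => rw [← hVi ψ]
      rw [← hVs, inner_self_eq_norm_sq_to_K]; norm_cast
    have key : (‖ψ‖:ℝ)^2 = ‖P ψ‖^2 - ‖V ψ‖^2 := by
      have : ⟪ψ, ψ⟫ = ⟪ψ, P ψ⟫ - ⟪ψ, V ψ⟫ := by
        rw [← inner_sub_right, h]
      rw [inner_self_eq_norm_sq_to_K, hP2, hV2] at this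
      exact_mod_cast congrArg Complex.re this
    have hPle : ‖P ψ‖ ≤ ‖ψ‖ := by
      rcases eq_or_ne (P ψ) 0 with h0 | h0
      · simp [h0]
      · have h1 : ‖P ψ‖^2 = Complex.re ⟪ψ, P ψ⟫ := by rw [hP2]; norm_cast
        have h2 : Complex.re ⟪ψ, P ψ⟫ ≤ ‖ψ‖ * ‖P ψ‖ := by
          calc Complex.re ⟪ψ, P ψ⟫ ≤ |(⟪ψ, P ψ⟫).re| := le_abs_self _
          _ ≤ ‖⟪ψ, P ψ⟫‖ := by exact Complex.abs_re_le_norm _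
          _ ≤ ‖ψ‖ * ‖P ψ‖ := norm_inner_le_norm _ _
        have := h1 ▸ h2
        have hpos : (0:ℝ) < ‖P ψ‖ := norm_pos_iff.mpr h0
        nlinarith
    have hV0 : V ψ = 0 := by
      have : ‖V ψ‖^2 ≤ 0 := by nlinarith [norm_nonneg ψ, norm_nonneg (P ψ)]
      have : ‖V ψ‖ = 0 := by nlinarith [norm_nonneg (V ψ)]
      simpa using this
    refine ⟨?_, hV0⟩
    rw [hV0, sub_zero] at h; exact h
  · rintro ⟨h1, h2⟩; rw [h1, h2, sub_zero]

lemma sum_rk1_self {u : Fin n → H} (hu : Orthonormal ℂ u) (k : Fin n) :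
    (∑ j, rk1 (u j)) (u k) = u k := by
  rw [sum_rk1_apply, Finset.sum_eq_single k]
  · rw [orthonormal_iff_ite.mp hu k k]; simp
  · intro j _ hj
    rw [orthonormal_iff_ite.mp hu j k, if_neg hj, zero_smul]
  · simp

lemma sum_rk1_eq_zero_iff {u : Fin n → H} (hu : Orthonormal ℂ u) (ψ : H) :
    (∑ j, rk1 (u j)) ψ = 0 ↔ ∀ k, ⟪u k, ψ⟫ = 0 := by
  constructor
  · intro h k
    have := sum_rk1_inner hu k ψ
    rw [h, inner_zero_right] at this; exact this.symm
  · intro h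
    rw [sum_rk1_apply]
    exact Finset.sum_eq_zero fun k _ => by rw [h k, zero_smul]

lemma index_lemma {no ni : ℕ} (u : Fin no → H) (v : Fin ni → H)
    (hu : Orthonormal ℂ u) (hv : Orthonormal ℂ v)
    (Φ : H →L[ℂ] H) (hΦ : Φ = ∑ k, rk1 (u k) - ∑ j, rk1 (v j)) :
    FiniteDimensional ℂ (LinearMap.ker ((Φ - 1 : H →L[ℂ] H) : H →ₗ[ℂ] H)) ∧
    FiniteDimensional ℂ (LinearMap.ker ((Φ + 1 : H →L[ℂ] H) : H →ₗ[ℂ] H)) ∧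
    (Module.finrank ℂ (LinearMap.ker ((Φ - 1 : H →L[ℂ] H) : H →ₗ[ℂ] H)) : ℤ)
        - (Module.finrank ℂ (LinearMap.ker ((Φ + 1 : H →L[ℂ] H) : H →ₗ[ℂ] H)) : ℤ) = (no : ℤ) - (ni : ℤ) := by
  set P := ∑ k, rk1 (u k) with hP
  set V := ∑ j, rk1 (v j) with hV
  have hker1 : ∀ ψ, ψ ∈ LinearMap.ker ((Φ - 1 : H →L[ℂ] H) : H →ₗ[ℂ] H) ↔ (P ψ = ψ ∧ V ψ = 0) := by
    intro ψ
    rw [LinearMap.mem_ker, ContinuousLinearMap.coe_coe]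
    have h1 : (Φ - 1) ψ = (P ψ - V ψ) - ψ := by
      simp [hΦ]
    rw [h1, sub_eq_zero]
    exact eig_one (sum_rk1_symm u) (sum_rk1_idem hu) (sum_rk1_symm v) (sum_rk1_idem hv) ψ
  have hker2 : ∀ ψ, ψ ∈ LinearMap.ker ((Φ + 1 : H →L[ℂ] H) : H →ₗ[ℂ] H) ↔ (V ψ = ψ ∧ P ψ = 0) := by
    intro ψ
    rw [LinearMap.mem_ker, ContinuousLinearMap.coe_coe]
    have h1 : (Φ + 1) ψ = -((V ψ - P ψ) - ψ) := by
      simp [hΦ]; abel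
    rw [h1, neg_eq_zero, sub_eq_zero]
    exact eig_one (sum_rk1_symm v) (sum_rk1_idem hv) (sum_rk1_symm u) (sum_rk1_idem hu) ψ
  set Su : Submodule ℂ H := Submodule.span ℂ (Set.range u) with hSu
  set Sv : Submodule ℂ H := Submodule.span ℂ (Set.range v) with hSv
  haveI : FiniteDimensional ℂ Su := FiniteDimensional.span_of_finite ℂ (Set.finite_range u)
  haveI : FiniteDimensional ℂ Sv := FiniteDimensional.span_of_finite ℂ (Set.finite_range v)
  have hPmem : ∀ ψ, P ψ ∈ Su := by
    intro ψ
    rw [hP, sum_rk1_apply]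
    exact Submodule.sum_mem _ fun k _ =>
      Submodule.smul_mem _ _ (Submodule.subset_span (Set.mem_range_self k))
  have hVmem : ∀ ψ, V ψ ∈ Sv := by
    intro ψ
    rw [hV, sum_rk1_apply]
    exact Submodule.sum_mem _ fun k _ =>
      Submodule.smul_mem _ _ (Submodule.subset_span (Set.mem_range_self k))
  have hPid : ∀ x ∈ Su, P x = x := by
    intro x hx
    induction hx using Submodule.span_induction with
    | mem x hx => obtain ⟨k, rfl⟩ := hx; exact sum_rk1_self hu k
    | zero => simp
    | add a b _ _ ha hb => rw [map_add, ha, hb]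
    | smul c a _ ha => rw [map_smul, ha]
  have hVid : ∀ x ∈ Sv, V x = x := by
    intro x hx
    induction hx using Submodule.span_induction with
    | mem x hx => obtain ⟨k, rfl⟩ := hx; exact sum_rk1_self hv k
    | zero => simp
    | add a b _ _ ha hb => rw [map_add, ha, hb]
    | smul c a _ ha => rw [map_smul, ha]
  set B : Su →ₗ[ℂ] Sv :=
    LinearMap.codRestrict Sv (((V : H →L[ℂ] H) : H →ₗ[ℂ] H).domRestrict Su)
      (fun x => hVmem x.1) with hB
  have hBapply : ∀ x : Su, (B x : H) = V x.1 := fun x => rfl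
  have e1 : LinearMap.ker ((Φ - 1 : H →L[ℂ] H) : H →ₗ[ℂ] H) ≃ₗ[ℂ] LinearMap.ker B := by
    refine
      { toFun := fun ψ => ⟨⟨ψ.1, ?_⟩, ?_⟩
        map_add' := fun a b => rfl
        map_smul' := fun c a => rfl
        invFun := fun x => ⟨x.1.1, ?_⟩
        left_inv := fun _ => rfl
        right_inv := fun _ => rfl }
    · have := (hker1 ψ.1).mp ψ.2
      rw [← this.1]; exact hPmem ψ.1
    · have := (hker1 ψ.1).mp ψ.2
      rw [LinearMap.mem_ker]
      apply Subtype.ext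
      rw [hBapply]
      exact this.2
    · rw [hker1]
      have hx2 := x.2
      rw [LinearMap.mem_ker] at hx2
      have hVx : V x.1.1 = 0 := by
        have := congrArg (Subtype.val) hx2
        rwa [hBapply] at this
      exact ⟨hPid _ x.1.2, hVx⟩
  have e2 : LinearMap.ker ((Φ + 1 : H →L[ℂ] H) : H →ₗ[ℂ] H) ≃ₗ[ℂ] (LinearMap.range B)ᗮ := by
    have horth : ∀ (y : H), y ∈ Sv → (P y = 0 ↔ ∀ x : Su, ⟪(V x.1 : H), y⟫ = 0) := by
      intro y hy
      rw [hP, sum_rk1_eq_zero_iff hu]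
      constructor
      · intro h x
        have haux : ∀ z ∈ Su, ⟪z, y⟫ = 0 := by
          intro z hz
          induction hz using Submodule.span_induction with
          | mem a ha => obtain ⟨k, rfl⟩ := ha; exact h k
          | zero => simp
          | add a b _ _ ha hb => rw [inner_add_left, ha, hb, add_zero]
          | smul c a _ ha => rw [inner_smul_left, ha, mul_zero]
        rw [sum_rk1_symm, hVid y hy]
        exact haux x.1 x.2
      · intro h k
        have := h ⟨u k, Submodule.subset_span (Set.mem_range_self k)⟩
        rwa [sum_rk1_symm, hVid y hy] at this
    refine
      { toFun := fun ψ => ⟨⟨ψ.1, ?_⟩, ?_⟩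
        map_add' := fun a b => rfl
        map_smul' := fun c a => rfl
        invFun := fun x => ⟨x.1.1, ?_⟩
        left_inv := fun _ => rfl
        right_inv := fun _ => rfl }
    · have := (hker2 ψ.1).mp ψ.2
      rw [← this.1]; exact hVmem ψ.1
    · have hψ := (hker2 ψ.1).mp ψ.2
      rw [Submodule.mem_orthogonal]
      rintro z ⟨x, rfl⟩
      have : ⟪(V x.1 : H), ψ.1⟫ = 0 := by
        have hmem : ψ.1 ∈ Sv := by rw [← hψ.1]; exact hVmem ψ.1
        exact (horth ψ.1 hmem).mp hψ.2 x
      simpa [Submodule.coe_inner, hBapply] using this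
    · rw [hker2]
      have hx2 := x.2
      rw [Submodule.mem_orthogonal] at hx2
      refine ⟨hVid _ x.1.2, ?_⟩
      rw [horth x.1.1 x.1.2]
      intro z
      have := hx2 (B z) (LinearMap.mem_range_self B z)
      simpa [Submodule.coe_inner, hBapply] using this
  haveI fk1 : FiniteDimensional ℂ (LinearMap.ker ((Φ - 1 : H →L[ℂ] H) : H →ₗ[ℂ] H)) := Module.Finite.equiv e1.symm
  haveI fk2 : FiniteDimensional ℂ (LinearMap.ker ((Φ + 1 : H →L[ℂ] H) : H →ₗ[ℂ] H)) := Module.Finite.equiv e2.symm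
  refine ⟨fk1, fk2, ?_⟩
  have hrn : Module.finrank ℂ (LinearMap.range B) + Module.finrank ℂ (LinearMap.ker B)
      = Module.finrank ℂ Su := LinearMap.finrank_range_add_finrank_ker B
  have hor : Module.finrank ℂ (LinearMap.range B)
      + Module.finrank ℂ ((LinearMap.range B)ᗮ : Submodule ℂ Sv)
      = Module.finrank ℂ Sv := Submodule.finrank_add_finrank_orthogonal _
  have hdim1 : Module.finrank ℂ (LinearMap.ker ((Φ - 1 : H →L[ℂ] H) : H →ₗ[ℂ] H))
      = Module.finrank ℂ (LinearMap.ker B) := e1.finrank_eq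
  have hdim2 : Module.finrank ℂ (LinearMap.ker ((Φ + 1 : H →L[ℂ] H) : H →ₗ[ℂ] H))
      = Module.finrank ℂ ((LinearMap.range B)ᗮ : Submodule ℂ Sv) := e2.finrank_eq
  have hSuno : Module.finrank ℂ Su = no := by
    rw [hSu, finrank_span_eq_card hu.linearIndependent]
    simp
  have hSvni : Module.finrank ℂ Sv = ni := by
    rw [hSv, finrank_span_eq_card hv.linearIndependent]
    simp
  rw [hdim1, hdim2]
  rw [hSuno] at hrn
  rw [hSvni] at hor
  omega

end Abstract

section Conc
variable {d : ℕ}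

local notation "⟪" x ", " y "⟫" => @inner ℂ _ _ x y

lemma coinVec_apply (i j : Fin (2 * (d + 1))) :
    coinVec d i j = if j = i then 1 else 0 := EuclideanSpace.single_apply i 1 j

lemma inner_coinVec_left (i : Fin (2 * (d + 1))) (v : CoinSp d) :
    ⟪coinVec d i, v⟫ = v i := by
  simp [coinVec, EuclideanSpace.inner_single_left]

lemma Pdir_apply (i : Fin (2 * (d + 1))) (v : CoinSp d) :
    Pdir d i v = v i • coinVec d i := by
  show ⟪coinVec d i, v⟫ • coinVec d i = _
  rw [inner_coinVec_left]

lemma lastCoord_sub (x y : Site d) :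
    lastCoord d (x - y) = lastCoord d x - lastCoord d y := rfl

lemma dirVec_last_of_lt {i : Fin (2 * (d + 1))} (h : (i : ℕ) < 2 * d) :
    lastCoord d (dirVec d i) = 0 := by
  show (if ((Fin.last d : Fin (d+1)) : ℕ) = (i : ℕ) / 2 then _ else 0 : ℤ) = 0
  rw [if_neg]
  rw [Fin.val_last]
  omega

lemma dirVec_last_PN : lastCoord d (dirVec d (idxPN d)) = 1 := by
  show (if ((Fin.last d : Fin (d+1)) : ℕ) = ((idxPN d : Fin (2*(d+1))) : ℕ) / 2 then
    (if ((idxPN d : Fin (2*(d+1))) : ℕ) % 2 = 0 then 1 else -1) else 0 : ℤ) = 1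
  rw [Fin.val_last]
  simp only [idxPN]
  split_ifs <;> omega

lemma dirVec_last_MN : lastCoord d (dirVec d (idxMN d)) = -1 := by
  show (if ((Fin.last d : Fin (d+1)) : ℕ) = ((idxMN d : Fin (2*(d+1))) : ℕ) / 2 then
    (if ((idxMN d : Fin (2*(d+1))) : ℕ) % 2 = 0 then 1 else -1) else 0 : ℤ) = -1
  rw [Fin.val_last]
  simp only [idxMN]
  split_ifs <;> omega

lemma dir_cases (i : Fin (2 * (d + 1))) :
    (i : ℕ) < 2 * d ∨ i = idxPN d ∨ i = idxMN d := by
  have := i.2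
  by_cases h1 : (i : ℕ) < 2 * d
  · exact Or.inl h1
  · by_cases h2 : (i : ℕ) = 2 * d
    · exact Or.inr (Or.inl (Fin.ext h2))
    · refine Or.inr (Or.inr (Fin.ext ?_))
      show (i : ℕ) = 2 * d + 1
      omega

lemma ne_PN_of_lt {i : Fin (2 * (d + 1))} (h : (i : ℕ) < 2 * d) : i ≠ idxPN d := by
  intro he
  have h2 : (i : ℕ) = 2 * d := by rw [he]; rfl
  omega

lemma ne_MN_of_lt {i : Fin (2 * (d + 1))} (h : (i : ℕ) < 2 * d) : i ≠ idxMN d := by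
  intro he
  have h2 : (i : ℕ) = 2 * d + 1 := by rw [he]; rfl
  omega

lemma PN_ne_MN : idxPN d ≠ idxMN d := by
  intro h
  have h2 : (2 * d : ℕ) = 2 * d + 1 := congrArg Fin.val h
  omega

lemma bulkSym_pos {x : Site d} (h : 0 < lastCoord d x) (v : CoinSp d) :
    bulkSym d x v = v := by
  rw [bulkSym, if_pos h]; rfl

lemma bulkSym_neg {x : Site d} (h : lastCoord d x < 0) (v : CoinSp d) :
    bulkSym d x v = 0 := by
  rw [bulkSym, if_neg (by omega), if_pos h]; rfl

lemma bulkSym_bd {x : Site d} (h : lastCoord d x = 0) (v : CoinSp d) :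
    bulkSym d x v = v (idxMN d) • coinVec d (idxMN d) := by
  rw [bulkSym, if_neg (by omega), if_neg (by omega), Pdir_apply]

lemma inner_leadVec (x x' : Site d) (i i' : Fin (2 * (d + 1))) :
    ⟪leadVec d x i, leadVec d x' i'⟫ = if x = x' ∧ i = i' then 1 else 0 := by
  rw [leadVec, leadVec, lp.inner_single_left]
  by_cases hx : x = x'
  · subst hx
    rw [lp.single_apply_self, inner_coinVec_left, coinVec_apply]
    by_cases hi : i = i' <;> simp [hi, eq_comm]
  · rw [lp.single_apply, Pi.single_eq_of_ne hx, if_neg (by tauto)]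
    exact inner_zero_right _

lemma norm_coinVec (i : Fin (2 * (d + 1))) : ‖coinVec d i‖ = 1 := by
  simp [coinVec]

lemma csmul_apply (c : ℂ) (v : CoinSp d) (i : Fin (2 * (d + 1))) :
    (c • v) i = c * v i := rfl

lemma qsmul_apply (c : ℂ) (φ : QWH d) (y : Site d) (i : Fin (2 * (d + 1))) :
    (c • φ) y i = c * φ y i := by
  rw [lp.coeFn_smul]; rfl

lemma unitary_norm_apply {A : CoinSp d →L[ℂ] CoinSp d} (hA : adjoint A * A = 1)
    (v : CoinSp d) : ‖A v‖ = ‖v‖ := by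
  have h1 : ⟪A v, A v⟫ = ⟪v, v⟫ := by
    rw [← adjoint_inner_left]
    have h2 : adjoint A (A v) = v := by
      rw [← ContinuousLinearMap.mul_apply, hA, ContinuousLinearMap.one_apply]
    rw [h2]
  rw [inner_self_eq_norm_sq_to_K, inner_self_eq_norm_sq_to_K] at h1
  have key : ‖A v‖^2 = ‖v‖^2 := by exact_mod_cast h1
  calc ‖A v‖ = Real.sqrt (‖A v‖^2) := (Real.sqrt_sq (norm_nonneg _)).symm
  _ = Real.sqrt (‖v‖^2) := by rw [key]
  _ = ‖v‖ := Real.sqrt_sq (norm_nonneg _)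

lemma coinSp_colinear {A : CoinSp d →L[ℂ] CoinSp d} (hA : adjoint A * A = 1)
    {τ τ' : Fin (2 * (d + 1))} (h : ‖⟪coinVec d τ', A (coinVec d τ)⟫‖ = 1) :
    ∃ c : ℂ, ‖c‖ = 1 ∧ A (coinVec d τ) = c • coinVec d τ' := by
  have hn' : ‖coinVec d τ'‖ = 1 := norm_coinVec τ'
  have hnA : ‖A (coinVec d τ)‖ = 1 := by
    rw [unitary_norm_apply hA, norm_coinVec]
  have h1 : ‖⟪coinVec d τ', A (coinVec d τ)⟫‖
      = ‖coinVec d τ'‖ * ‖A (coinVec d τ)‖ := by rw [hn', hnA, h]; ring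
  have hx0 : coinVec d τ' ≠ 0 := by
    intro h0; rw [h0, norm_zero] at hn'; norm_num at hn'
  have hy0 : A (coinVec d τ) ≠ 0 := by
    intro h0; rw [h0, norm_zero] at hnA; norm_num at hnA
  obtain ⟨r, hr0, hr⟩ := (norm_inner_eq_norm_iff hx0 hy0).mp h1
  refine ⟨r, ?_, hr⟩
  have h2 := congrArg norm hr
  rw [hnA, norm_smul, hn', mul_one] at h2
  exact h2.symm

lemma U_leadVec {U : QWH d →L[ℂ] QWH d} {C : Site d → (CoinSp d →L[ℂ] CoinSp d)}
    (hU : ∀ (ψ : QWH d) (x : Site d) (i : Fin (2 * (d + 1))),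
      (U ψ) x i = (C (x - dirVec d i) (ψ (x - dirVec d i))) i)
    (x : Site d) (τ τ' : Fin (2 * (d + 1))) (c : ℂ)
    (hc : C x (coinVec d τ) = c • coinVec d τ') :
    U (leadVec d x τ) = c • leadVec d (x + dirVec d τ') τ' := by
  apply lp.ext
  funext y; ext i
  rw [qsmul_apply, hU]
  by_cases hsrc : y - dirVec d i = x
  · rw [leadVec, hsrc, lp.single_apply_self, hc]
    by_cases hiτ : i = τ'
    · subst hiτ
      have hy : y = x + dirVec d i := by
        rw [← hsrc]; abel
      rw [leadVec, hy, lp.single_apply_self]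
      rfl
    · rw [csmul_apply, coinVec_apply, if_neg hiτ, mul_zero]
      by_cases hy : y = x + dirVec d τ'
      · rw [leadVec, hy, lp.single_apply_self, coinVec_apply, if_neg hiτ, mul_zero]
      · rw [leadVec, lp.single_apply, Pi.single_eq_of_ne hy]
        show (0:ℂ) = c * (0 : CoinSp d) i
        simp
  · rw [leadVec, lp.single_apply, Pi.single_eq_of_ne hsrc, map_zero]
    have hrhs : (lp.single 2 (x + dirVec d τ') (coinVec d τ') : QWH d) y i = 0 ∨
        (y = x + dirVec d τ' ∧ i = τ') := by
      by_cases hy : y = x + dirVec d τ'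
      · by_cases hiτ : i = τ'
        · exact Or.inr ⟨hy, hiτ⟩
        · left; rw [hy, lp.single_apply_self, coinVec_apply, if_neg hiτ]
      · left; rw [lp.single_apply, Pi.single_eq_of_ne hy]; rfl
    rcases hrhs with h0 | ⟨hy, hiτ⟩
    · rw [leadVec, h0]
      show (0 : CoinSp d) i = c * 0
      simp
    · exfalso
      apply hsrc
      rw [hy, hiτ]; abel

lemma leadProj_apply (x : Site d) (i : Fin (2 * (d + 1))) (ψ : QWH d) :
    leadProj d x i ψ = ⟪leadVec d x i, ψ⟫ • leadVec d x i := rfl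

lemma leadProj_eq_rk1 (x : Site d) (i : Fin (2 * (d + 1))) :
    leadProj d x i = rk1 (leadVec d x i) := rfl

end Conc
end Stmt15Aux

open Stmt15Aux
set_option maxHeartbeats 2000000
set_option synthInstance.maxHeartbeats 400000

/-- Consider the half spaces `ℤ^{d+1}_±` with boundary `Γ`, `n_i` admissible
incoming and `n_o` admissible outgoing leads lying in `Γ` with tangential tangents which
pairwise do not cross tangentially, the adapted projection `ℙ` which is `1` on `ℤ^{d+1}_+`,
`0` on `ℤ^{d+1}_−` and `|−N⟩⟨−N|` on `Γ`, the total lead projection `ℙ_L`, and a coin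
reflecting on `Γ` and conducting along the leads. Then for `Q = ℙ + ℙ_L` and
`Φ = U*QU − Q` one has `ind(Φ) = n_o − n_i`; moreover `U` maps vectors supported in
`ℤ^{d+1}_±` to vectors supported in `ℤ^{d+1}_± ∪ Γ`, each `Ran P_{ρ_k}(1)` is wandering for
`U`, and each `Ran P_{γ_j}(−1)` is wandering for `U*`. -/
theorem stmt_15 (d : ℕ) (ni no : ℕ)
    -- the incoming leads, defined on {…, −2, −1}, lying in Γ with tangential tangents
    (γin : Fin ni → ℤ → Site d) (τin : Fin ni → ℤ → Fin (2 * (d + 1)))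
    (hinΓ : ∀ j, ∀ t : ℤ, t ≤ -1 → lastCoord d (γin j t) = 0)
    (hinT : ∀ j, ∀ t : ℤ, t ≤ -1 → (τin j t : ℕ) < 2 * d)
    (hstepin : ∀ j, ∀ t : ℤ, t ≤ -1 → γin j t - γin j (t - 1) = dirVec d (τin j t))
    (hadmin : ∀ j, ∀ s t : ℤ, s ≤ -1 → t ≤ -1 →
      (γin j s, τin j s) = (γin j t, τin j t) → s = t)
    -- the outgoing leads, defined on {1, 2, …}, lying in Γ with tangential tangents
    (γout : Fin no → ℕ → Site d) (τout : Fin no → ℕ → Fin (2 * (d + 1)))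
    (houtΓ : ∀ k, ∀ t : ℕ, 1 ≤ t → lastCoord d (γout k t) = 0)
    (houtT : ∀ k, ∀ t : ℕ, 1 ≤ t → (τout k t : ℕ) < 2 * d)
    (hstepout : ∀ k, ∀ t : ℕ, 2 ≤ t → γout k t - γout k (t - 1) = dirVec d (τout k t))
    (hτ1 : ∀ k, τout k 1 = τout k 2)
    (hadmout : ∀ k, ∀ s t : ℕ, 1 ≤ s → 1 ≤ t →
      (γout k s, τout k s) = (γout k t, τout k t) → s = t)
    -- the leads pairwise do not cross tangentially
    (hcross₁ : ∀ j j', j ≠ j' → ∀ s t : ℤ, s ≤ -1 → t ≤ -1 →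
      (γin j s, τin j s) ≠ (γin j' t, τin j' t))
    (hcross₂ : ∀ k k', k ≠ k' → ∀ s t : ℕ, 1 ≤ s → 1 ≤ t →
      (γout k s, τout k s) ≠ (γout k' t, τout k' t))
    (hcross₃ : ∀ j k, ∀ s : ℤ, s ≤ -1 → ∀ t : ℕ, 1 ≤ t →
      (γin j s, τin j s) ≠ (γout k t, τout k t))
    -- the coin: unitary, reflecting on Γ, conducting along the leads
    (C : Site d → (CoinSp d →L[ℂ] CoinSp d))
    (hCunit : ∀ x, adjoint (C x) * C x = 1 ∧ C x * adjoint (C x) = 1)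
    (hCrefl : ∀ x : Site d, lastCoord d x = 0 →
      C x (coinVec d (idxPN d)) = coinVec d (idxMN d) ∧
      C x (coinVec d (idxMN d)) = coinVec d (idxPN d))
    (hCin : ∀ j, ∀ t : ℤ, t ≤ -2 →
      ‖@inner ℂ _ _ (coinVec d (τin j (t + 1))) (C (γin j t) (coinVec d (τin j t)))‖ = 1)
    (hCout : ∀ k, ∀ t : ℕ, 1 ≤ t →
      ‖@inner ℂ _ _ (coinVec d (τout k (t + 1))) (C (γout k t) (coinVec d (τout k t)))‖ = 1)
    -- the quantum walk
    (U : QWH d →L[ℂ] QWH d)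
    (hUunit : adjoint U * U = 1 ∧ U * adjoint U = 1)
    (hU : ∀ (ψ : QWH d) (x : Site d) (i : Fin (2 * (d + 1))),
      (U ψ) x i = (C (x - dirVec d i) (ψ (x - dirVec d i))) i)
    -- the bulk projection ℙ and the total projections on the quantum leads
    (Pop : QWH d →L[ℂ] QWH d)
    (hPop : ∀ (ψ : QWH d) (x : Site d), (Pop ψ) x = bulkSym d x (ψ x))
    (Pin : Fin ni → (QWH d →L[ℂ] QWH d))
    (hPin : ∀ j, ∀ ψ : QWH d,
      HasSum (fun t : {t : ℤ // t ≤ -1} => leadProj d (γin j t.1) (τin j t.1) ψ) (Pin j ψ))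
    (Pout : Fin no → (QWH d →L[ℂ] QWH d))
    (hPout : ∀ k, ∀ ψ : QWH d,
      HasSum (fun t : {t : ℕ // 1 ≤ t} => leadProj d (γout k t.1) (τout k t.1) ψ) (Pout k ψ))
    -- Q = ℙ + ℙ_L and its flux
    (Q Φ : QWH d →L[ℂ] QWH d)
    (hQ : Q = Pop + (∑ j, Pin j + ∑ k, Pout k))
    (hΦ : Φ = adjoint U * Q * U - Q) :
    (FiniteDimensional ℂ (LinearMap.ker ((Φ - 1 : QWH d →L[ℂ] QWH d) : QWH d →ₗ[ℂ] QWH d)) ∧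
     FiniteDimensional ℂ (LinearMap.ker ((Φ + 1 : QWH d →L[ℂ] QWH d) : QWH d →ₗ[ℂ] QWH d)) ∧
     (Module.finrank ℂ (LinearMap.ker ((Φ - 1 : QWH d →L[ℂ] QWH d) : QWH d →ₗ[ℂ] QWH d)) : ℤ)
        - (Module.finrank ℂ (LinearMap.ker ((Φ + 1 : QWH d →L[ℂ] QWH d) : QWH d →ₗ[ℂ] QWH d)) : ℤ) = (no : ℤ) - (ni : ℤ)) ∧
    -- U preserves the half spaces up to the boundary Γ
    (∀ ψ : QWH d, (∀ x : Site d, lastCoord d x ≤ 0 → ψ x = 0) →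
      ∀ x : Site d, lastCoord d x < 0 → (U ψ) x = 0) ∧
    (∀ ψ : QWH d, (∀ x : Site d, 0 ≤ lastCoord d x → ψ x = 0) →
      ∀ x : Site d, 0 < lastCoord d x → (U ψ) x = 0) ∧
    -- Ran P_{ρ_k}(1) is wandering for U
    (∀ k, ∀ x ∈ LinearMap.range (leadProj d (γout k 1) (τout k 1) : QWH d →ₗ[ℂ] QWH d),
      ∀ y ∈ LinearMap.range (leadProj d (γout k 1) (τout k 1) : QWH d →ₗ[ℂ] QWH d),
      ∀ m : ℕ, 1 ≤ m → @inner ℂ _ _ ((U ^ m) x) y = 0) ∧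
    -- Ran P_{γ_j}(−1) is wandering for U*
    (∀ j, ∀ x ∈ LinearMap.range (leadProj d (γin j (-1)) (τin j (-1)) : QWH d →ₗ[ℂ] QWH d),
      ∀ y ∈ LinearMap.range (leadProj d (γin j (-1)) (τin j (-1)) : QWH d →ₗ[ℂ] QWH d),
      ∀ m : ℕ, 1 ≤ m → @inner ℂ _ _ (((adjoint U) ^ m) x) y = 0) := by
  classical
  have hUadjU : ∀ ψ : QWH d, adjoint U (U ψ) = ψ := by
    intro ψ
    rw [← ContinuousLinearMap.mul_apply, hUunit.1, ContinuousLinearMap.one_apply]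
  have hUUadj : ∀ ψ : QWH d, U (adjoint U ψ) = ψ := by
    intro ψ
    rw [← ContinuousLinearMap.mul_apply, hUunit.2, ContinuousLinearMap.one_apply]
  -- unit steps along the leads
  have hstepO : ∀ k, ∀ t : ℕ, 1 ≤ t → ∃ c : ℂ, ‖c‖ = 1 ∧
      U (leadVec d (γout k t) (τout k t)) = c • leadVec d (γout k (t+1)) (τout k (t+1)) := by
    intro k t ht
    obtain ⟨c, hc1, hc2⟩ := coinSp_colinear (hCunit (γout k t)).1 (hCout k t ht)
    refine ⟨c, hc1, ?_⟩
    have h1 := U_leadVec hU (γout k t) (τout k t) (τout k (t+1)) c hc2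
    have h3 := hstepout k (t+1) (by omega)
    rw [Nat.add_sub_cancel] at h3
    have h2 : γout k t + dirVec d (τout k (t+1)) = γout k (t+1) := by
      rw [← h3]; abel
    rw [h2] at h1
    exact h1
  have hstepI : ∀ j, ∀ t : ℤ, t ≤ -2 → ∃ c : ℂ, ‖c‖ = 1 ∧
      U (leadVec d (γin j t) (τin j t)) = c • leadVec d (γin j (t+1)) (τin j (t+1)) := by
    intro j t ht
    obtain ⟨c, hc1, hc2⟩ := coinSp_colinear (hCunit (γin j t)).1 (hCin j t ht)
    refine ⟨c, hc1, ?_⟩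
    have h1 := U_leadVec hU (γin j t) (τin j t) (τin j (t+1)) c hc2
    have h3 := hstepin j (t+1) (by omega)
    rw [show t + 1 - 1 = t by ring] at h3
    have h2 : γin j t + dirVec d (τin j (t+1)) = γin j (t+1) := by
      rw [← h3]; abel
    rw [h2] at h1
    exact h1
  have hadj_step : ∀ (w w' : QWH d) (c : ℂ), ‖c‖ = 1 → U w = c • w' →
      ∃ c' : ℂ, ‖c'‖ = 1 ∧ adjoint U w' = c' • w := by
    intro w w' c hc h
    have hc0 : c ≠ 0 := by
      intro h0; rw [h0, norm_zero] at hc; norm_num at hc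
    refine ⟨c⁻¹, by rw [norm_inv, hc]; norm_num, ?_⟩
    have h1 : adjoint U (U w) = c • adjoint U w' := by rw [h, map_smul]
    rw [hUadjU] at h1
    rw [h1, smul_smul, inv_mul_cancel₀ hc0, one_smul]
  have hstepIadj : ∀ j, ∀ t : ℤ, t ≤ -1 → ∃ c : ℂ, ‖c‖ = 1 ∧
      adjoint U (leadVec d (γin j t) (τin j t)) = c • leadVec d (γin j (t-1)) (τin j (t-1)) := by
    intro j t ht
    obtain ⟨c, hc1, hc2⟩ := hstepI j (t-1) (by omega)
    rw [show t - 1 + 1 = t by ring] at hc2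
    exact hadj_step _ _ c hc1 hc2
  -- the distinguished vectors
  obtain ⟨u, hu_def⟩ : ∃ u : Fin no → QWH d,
      ∀ k, u k = adjoint U (leadVec d (γout k 1) (τout k 1)) := ⟨_, fun k => rfl⟩
  obtain ⟨v, hv_def⟩ : ∃ v : Fin ni → QWH d,
      ∀ j, v j = leadVec d (γin j (-1)) (τin j (-1)) := ⟨_, fun j => rfl⟩
  have hinner_adj : ∀ a b : QWH d,
      @inner ℂ _ _ (adjoint U a) (adjoint U b) = @inner ℂ _ _ a b := by
    intro a b
    rw [adjoint_inner_left, hUUadj]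
  have huON : Orthonormal ℂ u := by
    rw [orthonormal_iff_ite]
    intro k k'
    rw [hu_def k, hu_def k', hinner_adj, inner_leadVec]
    by_cases hkk : k = k'
    · subst hkk; rw [if_pos ⟨rfl, rfl⟩, if_pos rfl]
    · rw [if_neg hkk, if_neg]
      rintro ⟨h1, h2⟩
      exact hcross₂ k k' hkk 1 1 le_rfl le_rfl (by rw [Prod.mk.injEq]; exact ⟨h1, h2⟩)
  have hvON : Orthonormal ℂ v := by
    rw [orthonormal_iff_ite]
    intro j j'
    rw [hv_def j, hv_def j', inner_leadVec]
    by_cases hjj : j = j'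
    · subst hjj; rw [if_pos ⟨rfl, rfl⟩, if_pos rfl]
    · rw [if_neg hjj, if_neg]
      rintro ⟨h1, h2⟩
      exact hcross₁ j j' hjj (-1) (-1) le_rfl le_rfl (by rw [Prod.mk.injEq]; exact ⟨h1, h2⟩)
  -- the coin preserves the normal structure on the boundary
  have hCP : ∀ g : Site d, lastCoord d g = 0 → ∀ v' : CoinSp d,
      (C g v') (idxPN d) = v' (idxMN d) := by
    intro g hg v'
    have h1 : (C g v') (idxPN d) = @inner ℂ _ _ (coinVec d (idxPN d)) (C g v') :=
      (inner_coinVec_left _ _).symm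
    have h2 : adjoint (C g) (coinVec d (idxPN d)) = coinVec d (idxMN d) := by
      have h3 := congrArg (adjoint (C g)) (hCrefl g hg).2
      rw [← ContinuousLinearMap.mul_apply, (hCunit g).1,
        ContinuousLinearMap.one_apply] at h3
      exact h3.symm
    rw [h1, ← adjoint_inner_left, h2, inner_coinVec_left]
  -- Pop commutes with U
  have hPopComm : ∀ ψ : QWH d, Pop (U ψ) = U (Pop ψ) := by
    intro ψ
    apply lp.ext
    funext y; ext i
    have hL : (Pop (U ψ)) y i = (bulkSym d y ((U ψ) y)) i := by rw [hPop]
    have hR : (U (Pop ψ)) y i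
        = (C (y - dirVec d i) (bulkSym d (y - dirVec d i) (ψ (y - dirVec d i)))) i := by
      rw [hU, hPop]
    rw [hL, hR]
    rcases dir_cases (d := d) i with hi | hi | hi
    · -- tangential direction
      have hlast : lastCoord d (y - dirVec d i) = lastCoord d y := by
        rw [lastCoord_sub, dirVec_last_of_lt hi]; ring
      rcases lt_trichotomy (lastCoord d y) 0 with hy | hy | hy
      · rw [bulkSym_neg hy, bulkSym_neg (by omega), map_zero]
      · rw [bulkSym_bd hy, bulkSym_bd (by omega), map_smul,
          (hCrefl (y - dirVec d i) (by omega)).2]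
        rw [csmul_apply, csmul_apply, coinVec_apply, coinVec_apply,
          if_neg (ne_MN_of_lt hi), if_neg (ne_PN_of_lt hi), mul_zero, mul_zero]
      · rw [bulkSym_pos hy, bulkSym_pos (by omega), hU]
    · -- inward normal direction
      subst hi
      have hlast : lastCoord d (y - dirVec d (idxPN d)) = lastCoord d y - 1 := by
        rw [lastCoord_sub, dirVec_last_PN]
      rcases lt_trichotomy (lastCoord d y) 0 with hy | hy | hy
      · rw [bulkSym_neg hy, bulkSym_neg (by omega), map_zero]
      · rw [bulkSym_bd hy, bulkSym_neg (by omega), map_zero, csmul_apply,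
          coinVec_apply, if_neg PN_ne_MN, mul_zero]
        rfl
      · by_cases hy1 : lastCoord d y = 1
        · rw [bulkSym_pos hy, bulkSym_bd (by omega), map_smul,
            (hCrefl (y - dirVec d (idxPN d)) (by omega)).2, csmul_apply,
            coinVec_apply, if_pos rfl, mul_one, hU]
          exact hCP (y - dirVec d (idxPN d)) (by omega) (ψ (y - dirVec d (idxPN d)))
        · rw [bulkSym_pos hy, bulkSym_pos (by omega), hU]
    · -- outward normal direction
      subst hi
      have hlast : lastCoord d (y - dirVec d (idxMN d)) = lastCoord d y + 1 := by
        rw [lastCoord_sub, dirVec_last_MN]; ring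
      rcases lt_trichotomy (lastCoord d y) 0 with hy | hy | hy
      · by_cases hy1 : lastCoord d y = -1
        · rw [bulkSym_neg hy, bulkSym_bd (by omega), map_smul,
            (hCrefl (y - dirVec d (idxMN d)) (by omega)).2, csmul_apply,
            coinVec_apply, if_neg (Ne.symm PN_ne_MN), mul_zero]
          rfl
        · rw [bulkSym_neg hy, bulkSym_neg (by omega), map_zero]
      · rw [bulkSym_bd hy, bulkSym_pos (by omega), csmul_apply,
          coinVec_apply, if_pos rfl, mul_one, hU]
      · rw [bulkSym_pos hy, bulkSym_pos (by omega), hU]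
  have hPopU : ∀ ψ : QWH d, adjoint U (Pop (U ψ)) = Pop ψ := by
    intro ψ
    rw [hPopComm, hUadjU]
  -- conjugation of the outgoing lead projections
  have hPoutU : ∀ (k : Fin no) (ψ : QWH d),
      adjoint U (Pout k (U ψ)) = Pout k ψ + rk1 (u k) ψ := by
    intro k ψ
    have h1 : HasSum (fun t : {t : ℕ // 1 ≤ t} =>
        rk1 (adjoint U (leadVec d (γout k t.1) (τout k t.1))) ψ)
        (adjoint U (Pout k (U ψ))) := by
      have h0 := (hPout k (U ψ)).mapL (adjoint U)
      exact hasSum_congr' (fun t => adj_rk1 U (leadVec d (γout k t.1) (τout k t.1)) ψ) h0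
    have hterm : ∀ t : {t : ℕ // 1 ≤ t},
        rk1 (adjoint U (leadVec d (γout k t.1) (τout k t.1))) ψ
        = (if t.1 = 1 then rk1 (u k) ψ else 0)
          + (if t.1 = 1 then 0
              else rk1 (leadVec d (γout k (t.1 - 1)) (τout k (t.1 - 1))) ψ) := by
      intro t
      by_cases h : t.1 = 1
      · rw [if_pos h, if_pos h, add_zero, h, hu_def k]
      · rw [if_neg h, if_neg h, zero_add]
        obtain ⟨c, hc1, hc2⟩ := hstepO k (t.1 - 1) (by have := t.2; omega)
        rw [show t.1 - 1 + 1 = t.1 by have := t.2; omega] at hc2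
        obtain ⟨c', hc1', hc2'⟩ := hadj_step _ _ c hc1 hc2
        rw [hc2', rk1_smul_unit hc1']
    have h3 : HasSum (fun t : {t : ℕ // 1 ≤ t} =>
        (if t.1 = 1 then rk1 (u k) ψ else 0)
        + (if t.1 = 1 then 0
            else rk1 (leadVec d (γout k (t.1 - 1)) (τout k (t.1 - 1))) ψ))
        (rk1 (u k) ψ + Pout k ψ) := by
      apply HasSum.add
      · refine hasSum_congr' (f := fun t : {t : ℕ // 1 ≤ t} =>
          if t = (⟨1, le_rfl⟩ : {t : ℕ // 1 ≤ t}) then rk1 (u k) ψ else 0)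
          (fun t => ?_) (hasSum_ite_eq _ _)
        show (if t = (⟨1, le_rfl⟩ : {t : ℕ // 1 ≤ t}) then rk1 (u k) ψ else 0) = _
        by_cases h : t.1 = 1
        · have ht : t = (⟨1, le_rfl⟩ : {t : ℕ // 1 ≤ t}) := Subtype.ext h
          rw [ht]
          simp; exact fun h => absurd rfl h
        · rw [if_neg (fun he => h (congrArg Subtype.val he)), if_neg h]
      · have hemb : Function.Injective
            (fun t : {t : ℕ // 1 ≤ t} => (⟨t.1 + 1, by omega⟩ : {t : ℕ // 1 ≤ t})) := by
          intro a b hab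
          apply Subtype.ext
          have := congrArg Subtype.val hab
          simpa using this
        have hvan : ∀ x : {t : ℕ // 1 ≤ t}, x ∉ Set.range
            (fun t : {t : ℕ // 1 ≤ t} => (⟨t.1 + 1, by omega⟩ : {t : ℕ // 1 ≤ t})) →
            (if x.1 = 1 then 0
              else rk1 (leadVec d (γout k (x.1 - 1)) (τout k (x.1 - 1))) ψ) = 0 := by
          intro x hx
          by_cases h : x.1 = 1
          · rw [if_pos h]
          · exfalso
            apply hx
            refine ⟨⟨x.1 - 1, by have := x.2; omega⟩, ?_⟩
            apply Subtype.ext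
            show x.1 - 1 + 1 = x.1
            have := x.2; omega
        rw [← Function.Injective.hasSum_iff hemb hvan]
        refine hasSum_congr' (fun t => ?_) (hPout k ψ)
        show leadProj d (γout k t.1) (τout k t.1) ψ = _
        simp only [Function.comp]
        rw [if_neg (by have := t.2; omega), show t.1 + 1 - 1 = t.1 by omega]
        rfl
    have h1' : HasSum (fun t : {t : ℕ // 1 ≤ t} =>
        (if t.1 = 1 then rk1 (u k) ψ else 0)
        + (if t.1 = 1 then 0
            else rk1 (leadVec d (γout k (t.1 - 1)) (τout k (t.1 - 1))) ψ))
        (adjoint U (Pout k (U ψ))) := hasSum_congr' hterm h1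
    exact (h3.unique h1').symm.trans (add_comm _ _)
  -- conjugation of the incoming lead projections
  have hPinU : ∀ (j : Fin ni) (ψ : QWH d),
      adjoint U (Pin j (U ψ)) = Pin j ψ - rk1 (v j) ψ := by
    intro j ψ
    have h1 : HasSum (fun t : {t : ℤ // t ≤ -1} =>
        rk1 (adjoint U (leadVec d (γin j t.1) (τin j t.1))) ψ)
        (adjoint U (Pin j (U ψ))) := by
      have h0 := (hPin j (U ψ)).mapL (adjoint U)
      exact hasSum_congr' (fun t => adj_rk1 U (leadVec d (γin j t.1) (τin j t.1)) ψ) h0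
    have hterm : ∀ t : {t : ℤ // t ≤ -1},
        rk1 (adjoint U (leadVec d (γin j t.1) (τin j t.1))) ψ
        = rk1 (leadVec d (γin j (t.1 - 1)) (τin j (t.1 - 1))) ψ := by
      intro t
      obtain ⟨c, hc1, hc2⟩ := hstepIadj j t.1 t.2
      rw [hc2, rk1_smul_unit hc1]
    have h1' : HasSum (fun t : {t : ℤ // t ≤ -1} =>
        rk1 (leadVec d (γin j (t.1 - 1)) (τin j (t.1 - 1))) ψ)
        (adjoint U (Pin j (U ψ))) := hasSum_congr' hterm h1
    have h2 : HasSum (fun t : {t : ℤ // t ≤ -1} =>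
        rk1 (leadVec d (γin j t.1) (τin j t.1)) ψ
          - (if t = (⟨-1, le_rfl⟩ : {t : ℤ // t ≤ -1}) then rk1 (v j) ψ else 0))
        (Pin j ψ - rk1 (v j) ψ) := by
      refine HasSum.sub ?_ (hasSum_ite_eq _ _)
      refine hasSum_congr' (fun t => ?_) (hPin j ψ)
      rfl
    have h3 : HasSum (fun t : {t : ℤ // t ≤ -1} =>
        if t.1 = -1 then 0 else rk1 (leadVec d (γin j t.1) (τin j t.1)) ψ)
        (Pin j ψ - rk1 (v j) ψ) := by
      refine hasSum_congr' (fun t => ?_) h2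
      by_cases h : t.1 = -1
      · rw [if_pos (Subtype.ext h), if_pos h, hv_def j]
        have : leadVec d (γin j t.1) (τin j t.1)
            = leadVec d (γin j (-1)) (τin j (-1)) := by rw [h]
        rw [this, sub_self]
      · rw [if_neg (fun he => h (by rw [he])), if_neg h, sub_zero]
    have hemb : Function.Injective
        (fun t : {t : ℤ // t ≤ -1} => (⟨t.1 - 1, by have := t.2; omega⟩ : {t : ℤ // t ≤ -1})) := by
      intro a b hab
      apply Subtype.ext
      have := congrArg Subtype.val hab
      simp only at this
      omega
    have hvan : ∀ x : {t : ℤ // t ≤ -1}, x ∉ Set.range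
        (fun t : {t : ℤ // t ≤ -1} => (⟨t.1 - 1, by have := t.2; omega⟩ : {t : ℤ // t ≤ -1})) →
        (if x.1 = -1 then 0 else rk1 (leadVec d (γin j x.1) (τin j x.1)) ψ) = 0 := by
      intro x hx
      by_cases h : x.1 = -1
      · rw [if_pos h]
      · exfalso
        apply hx
        refine ⟨⟨x.1 + 1, by have := x.2; omega⟩, ?_⟩
        apply Subtype.ext
        show x.1 + 1 - 1 = x.1
        ring
    rw [← Function.Injective.hasSum_iff hemb hvan] at h3
    have h3' : HasSum (fun t : {t : ℤ // t ≤ -1} =>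
        rk1 (leadVec d (γin j (t.1 - 1)) (τin j (t.1 - 1))) ψ)
        (Pin j ψ - rk1 (v j) ψ) := by
      refine hasSum_congr' (fun t => ?_) h3
      simp only [Function.comp]
      rw [if_neg (by have := t.2; omega)]
    exact (h3'.unique h1').symm
  -- the operator identity
  have hΦop : Φ = ∑ k, rk1 (u k) - ∑ j, rk1 (v j) := by
    apply ContinuousLinearMap.ext
    intro ψ
    have e0 : Φ ψ = adjoint U (Q (U ψ)) - Q ψ := by
      rw [hΦ]
      simp only [ContinuousLinearMap.sub_apply, ContinuousLinearMap.mul_apply]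
    rw [e0, hQ]
    simp only [ContinuousLinearMap.add_apply, ContinuousLinearMap.sum_apply,
      ContinuousLinearMap.sub_apply, map_add, map_sum]
    rw [hPopU ψ]
    rw [Finset.sum_congr rfl (fun j _ => hPinU j ψ),
      Finset.sum_congr rfl (fun k _ => hPoutU k ψ)]
    rw [Finset.sum_sub_distrib, Finset.sum_add_distrib]
    abel
  obtain ⟨fk1, fk2, hind⟩ := index_lemma u v huON hvON Φ hΦop
  refine ⟨⟨fk1, fk2, hind⟩, ?_, ?_, ?_, ?_⟩
  · -- upper half space preservation
    intro ψ h x hx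
    ext i
    rw [hU]
    have hle : lastCoord d (x - dirVec d i) ≤ 0 := by
      rcases dir_cases (d := d) i with hi | hi | hi
      · rw [lastCoord_sub, dirVec_last_of_lt hi]; omega
      · rw [hi, lastCoord_sub, dirVec_last_PN]; omega
      · rw [hi, lastCoord_sub, dirVec_last_MN]; omega
    rw [h _ hle, map_zero]
  · -- lower half space preservation
    intro ψ h x hx
    ext i
    rw [hU]
    have hle : 0 ≤ lastCoord d (x - dirVec d i) := by
      rcases dir_cases (d := d) i with hi | hi | hi
      · rw [lastCoord_sub, dirVec_last_of_lt hi]; omega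
      · rw [hi, lastCoord_sub, dirVec_last_PN]; omega
      · rw [hi, lastCoord_sub, dirVec_last_MN]; omega
    rw [h _ hle, map_zero]
  · -- outgoing leads are wandering for U
    intro k x hx y hy m hm
    obtain ⟨φ, rfl⟩ := hx
    obtain ⟨χ, rfl⟩ := hy
    have hpow : ∀ m : ℕ, ∃ c : ℂ, ‖c‖ = 1 ∧
        (U ^ m) (leadVec d (γout k 1) (τout k 1))
          = c • leadVec d (γout k (1 + m)) (τout k (1 + m)) := by
      intro m
      induction m with
      | zero => exact ⟨1, by norm_num, by simp⟩
      | succ m ih =>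
        obtain ⟨c, hc1, hc2⟩ := ih
        obtain ⟨c', hc1', hc2'⟩ := hstepO k (1 + m) (by omega)
        refine ⟨c * c', by rw [norm_mul, hc1, hc1', mul_one], ?_⟩
        rw [show 1 + (m + 1) = (1 + m) + 1 by omega, pow_succ',
          ContinuousLinearMap.mul_apply, hc2, map_smul, hc2', smul_smul]
    obtain ⟨c, hc1, hc2⟩ := hpow m
    have hne : ¬(γout k (1 + m) = γout k 1 ∧ τout k (1 + m) = τout k 1) := by
      rintro ⟨h1, h2⟩
      have := hadmout k (1 + m) 1 (by omega) le_rfl (by rw [Prod.mk.injEq]; exact ⟨h1, h2⟩)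
      omega
    simp only [ContinuousLinearMap.coe_coe]
    rw [leadProj_apply, leadProj_apply, map_smul, hc2]
    rw [inner_smul_left, inner_smul_left, inner_smul_right, inner_leadVec, if_neg hne]
    ring
  · -- incoming leads are wandering for U*
    intro j x hx y hy m hm
    obtain ⟨φ, rfl⟩ := hx
    obtain ⟨χ, rfl⟩ := hy
    have hpow : ∀ m : ℕ, ∃ c : ℂ, ‖c‖ = 1 ∧
        ((adjoint U) ^ m) (leadVec d (γin j (-1)) (τin j (-1)))
          = c • leadVec d (γin j (-1 - m)) (τin j (-1 - m)) := by
      intro m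
      induction m with
      | zero => exact ⟨1, by norm_num, by simp⟩
      | succ m ih =>
        obtain ⟨c, hc1, hc2⟩ := ih
        obtain ⟨c', hc1', hc2'⟩ := hstepIadj j (-1 - m) (by omega)
        refine ⟨c * c', by rw [norm_mul, hc1, hc1', mul_one], ?_⟩
        rw [show (-1 : ℤ) - ((m + 1 : ℕ) : ℤ) = (-1 - (m : ℤ)) - 1 by push_cast; ring,
          pow_succ', ContinuousLinearMap.mul_apply, hc2, map_smul, hc2', smul_smul]
    obtain ⟨c, hc1, hc2⟩ := hpow m
    have hne : ¬(γin j (-1 - m) = γin j (-1) ∧ τin j (-1 - m) = τin j (-1)) := by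
      rintro ⟨h1, h2⟩
      have := hadmin j (-1 - m) (-1) (by omega) le_rfl (by rw [Prod.mk.injEq]; exact ⟨h1, h2⟩)
      omega
    simp only [ContinuousLinearMap.coe_coe]
    rw [leadProj_apply, leadProj_apply, map_smul, hc2]
    rw [inner_smul_left, inner_smul_left, inner_smul_right, inner_leadVec, if_neg hne]
    ring
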